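/- For any 0 < ε < 1, there exists an ε-net N of the unit sphere S^{n-1} in ℝ^n (with respect to the Euclidean metric) such that |N| ≤ 2n(1 + 2/ε)^{n-1}. -/

import Mathlib

open Metric MeasureTheory Finset

private lemma pack_bound (n : ℕ) (hn : 1 ≤ n) (ε : ℝ) (hε0 : 0 < ε) (hε1 : ε < 1)
    (t : Finset (EuclideanSpace ℝ (Fin n)))
    (ht : (↑t : Set (EuclideanSpace ℝ (Fin n))) ⊆ Metric.sphere 0 1)
    (hsep : ∀ x ∈ t, ∀ y ∈ t, x ≠ y → ε ≤ dist x y) :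
    (t.card : ℝ) ≤ 2 * n * (1 + 2 / ε) ^ (n - 1) := by
  haveI : Nontrivial (EuclideanSpace ℝ (Fin n)) := by
    have : 0 < Module.finrank ℝ (EuclideanSpace ℝ (Fin n)) := by
      rw [finrank_euclideanSpace_fin]; omega
    exact Module.nontrivial_of_finrank_pos this
  set μ : Measure (EuclideanSpace ℝ (Fin n)) := volume
  set c := μ (ball 0 1) with hc
  have hε2 : (0:ℝ) < ε / 2 := by linarith
  have hb1 : (0:ℝ) ≤ 1 - ε / 2 := by linarith
  have hb2 : (0:ℝ) ≤ 1 + ε / 2 := by linarith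
  -- each small ball is in the annulus
  have hann : ∀ y ∈ t, ball y (ε/2) ⊆
      ball (0:EuclideanSpace ℝ (Fin n)) (1 + ε/2) \ closedBall 0 (1 - ε/2) := by
    intro y hy z hz
    have hy1 : dist y (0:EuclideanSpace ℝ (Fin n)) = 1 := ht hy
    rw [mem_ball] at hz
    constructor
    · rw [mem_ball]
      calc dist z 0 ≤ dist z y + dist y 0 := dist_triangle _ _ _
        _ < ε/2 + 1 := by linarith
        _ = 1 + ε/2 := by ring
    · simp only [Set.mem_setOf_eq, mem_closedBall, not_le]
      have := dist_triangle y z (0:EuclideanSpace ℝ (Fin n))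
      have hzy : dist y z < ε / 2 := by rwa [dist_comm] at hz
      linarith
  have hdisj : (↑t : Set (EuclideanSpace ℝ (Fin n))).PairwiseDisjoint
      (fun y => ball y (ε/2)) := by
    intro x hx y hy hxy
    exact ball_disjoint_ball (by linarith [hsep x hx y hy hxy])
  have hUeq : μ (⋃ y ∈ t, ball y (ε/2)) = t.card * (ENNReal.ofReal ((ε/2)^n) * c) := by
    rw [measure_biUnion_finset hdisj (fun b _ => measurableSet_ball)]
    have : ∀ y ∈ t, μ (ball y (ε/2)) = ENNReal.ofReal ((ε/2)^n) * c := by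
      intro y hy
      rw [Measure.addHaar_ball μ y hε2.le, finrank_euclideanSpace_fin]
    rw [Finset.sum_congr rfl this, Finset.sum_const, nsmul_eq_mul]
  have hdisj2 : Disjoint (⋃ y ∈ t, ball y (ε/2))
      (closedBall (0:EuclideanSpace ℝ (Fin n)) (1 - ε/2)) := by
    rw [Set.disjoint_left]
    intro z hz
    rw [Set.mem_iUnion₂] at hz
    obtain ⟨y, hy, hzy⟩ := hz
    exact (hann y hy hzy).2
  have hsub : (⋃ y ∈ t, ball y (ε/2)) ∪ closedBall (0:EuclideanSpace ℝ (Fin n)) (1 - ε/2)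
      ⊆ ball (0:EuclideanSpace ℝ (Fin n)) (1 + ε/2) := by
    apply Set.union_subset
    · exact Set.iUnion₂_subset fun y hy => (hann y hy).trans Set.diff_subset
    · exact closedBall_subset_ball (by linarith)
  have hmeas : μ (⋃ y ∈ t, ball y (ε/2)) + μ (closedBall (0:EuclideanSpace ℝ (Fin n)) (1 - ε/2))
      ≤ μ (ball (0:EuclideanSpace ℝ (Fin n)) (1 + ε/2)) := by
    rw [← measure_union hdisj2 measurableSet_closedBall]
    exact measure_mono hsub
  rw [hUeq, Measure.addHaar_closedBall μ _ hb1, Measure.addHaar_ball μ _ hb2,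
    finrank_euclideanSpace_fin] at hmeas
  have hc0 : c ≠ 0 := (measure_ball_pos μ 0 one_pos).ne'
  have hctop : c ≠ ⊤ := measure_ball_lt_top.ne
  -- cancel c
  have key : (t.card : ℝ) * (ε/2)^n + (1 - ε/2)^n ≤ (1 + ε/2)^n := by
    have h1 : (ENNReal.ofReal ((t.card : ℝ) * (ε/2)^n + (1 - ε/2)^n)) * c
        ≤ ENNReal.ofReal ((1 + ε/2)^n) * c := by
      rw [ENNReal.ofReal_add (by positivity) (by positivity), ENNReal.ofReal_mul (by positivity),
        ENNReal.ofReal_natCast, add_mul, mul_assoc]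
      exact hmeas
    rw [ENNReal.mul_le_mul_iff_left hc0 hctop] at h1
    rwa [ENNReal.ofReal_le_ofReal_iff (by positivity)] at h1
  obtain ⟨m, rfl⟩ : ∃ m, n = m + 1 := ⟨n - 1, by omega⟩
  simp only [Nat.add_sub_cancel] at *
  -- algebraic bound
  have halg : (1 + ε/2)^(m+1) - (1 - ε/2)^(m+1) ≤ (m+1 : ℝ) * ε * (1 + ε/2)^m := by
    have hgs := geom_sum₂_mul (1 + ε/2) (1 - ε/2) (m+1)
    have hd : (1 + ε/2) - (1 - ε/2) = ε := by ring
    rw [hd, Nat.add_sub_cancel] at hgs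
    rw [← hgs]
    have hsum : (∑ i ∈ Finset.range (m+1), (1 + ε/2)^i * (1 - ε/2)^(m-i))
        ≤ (m+1 : ℝ) * (1 + ε/2)^m := by
      calc (∑ i ∈ Finset.range (m+1), (1 + ε/2)^i * (1 - ε/2)^(m-i))
          ≤ ∑ _i ∈ Finset.range (m+1), (1 + ε/2)^m := by
            apply Finset.sum_le_sum
            intro i hi
            rw [Finset.mem_range] at hi
            calc (1 + ε/2)^i * (1 - ε/2)^(m-i)
                ≤ (1 + ε/2)^i * (1 + ε/2)^(m-i) := by
                  apply mul_le_mul_of_nonneg_left _ (by positivity)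
                  exact pow_le_pow_left₀ hb1 (by linarith) _
              _ = (1 + ε/2)^m := by
                  rw [← pow_add]
                  congr 1
                  omega
        _ = (m+1 : ℝ) * (1 + ε/2)^m := by
            rw [Finset.sum_const, Finset.card_range, nsmul_eq_mul]
            push_cast; ring
    calc (∑ i ∈ Finset.range (m+1), (1 + ε/2)^i * (1 - ε/2)^(m-i)) * ε
        ≤ ((m+1 : ℝ) * (1 + ε/2)^m) * ε := by
          apply mul_le_mul_of_nonneg_right hsum hε0.le
      _ = (m+1 : ℝ) * ε * (1 + ε/2)^m := by ring
  -- conclude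
  have hpow : (0:ℝ) < (ε/2)^(m+1) := pow_pos hε2 _
  rw [← mul_le_mul_iff_of_pos_right hpow]
  have hrw : 2 * ((m:ℝ)+1) * (1 + 2/ε)^m * (ε/2)^(m+1) = ((m:ℝ)+1) * ε * (1 + ε/2)^m := by
    have h1 : ((1:ℝ) + 2/ε) * (ε/2) = 1 + ε/2 := by field_simp; ring
    calc 2 * ((m:ℝ)+1) * (1 + 2/ε)^m * (ε/2)^(m+1)
        = ((m:ℝ)+1) * ε * ((1 + 2/ε) * (ε/2))^m := by rw [mul_pow, pow_succ]; ring
      _ = ((m:ℝ)+1) * ε * (1 + ε/2)^m := by rw [h1]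
  push_cast
  rw [hrw]
  have h2 : ((0:ℝ)) ≤ (1 - ε/2)^(m+1) := by positivity
  linarith

theorem eps_net_sphere (n : ℕ) (ε : ℝ) (hε0 : 0 < ε) (hε1 : ε < 1) :
    ∃ N : Finset (EuclideanSpace ℝ (Fin n)),
      (↑N : Set (EuclideanSpace ℝ (Fin n))) ⊆ Metric.sphere 0 1 ∧
      (∀ x ∈ Metric.sphere (0 : EuclideanSpace ℝ (Fin n)) 1, ∃ y ∈ N, dist x y < ε) ∧
      (N.card : ℝ) ≤ 2 * n * (1 + 2 / ε) ^ (n - 1) := by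
  classical
  rcases Nat.eq_zero_or_pos n with hn | hn
  · subst hn
    refine ⟨∅, by simp, ?_, by simp⟩
    intro x hx
    have : x = 0 := Subsingleton.elim x 0
    rw [this] at hx
    simp at hx
  -- n ≥ 1
  set B : ℝ := 2 * n * (1 + 2 / ε) ^ (n - 1) with hB
  set S : Set ℕ := {k | ∃ t : Finset (EuclideanSpace ℝ (Fin n)),
      (↑t : Set (EuclideanSpace ℝ (Fin n))) ⊆ Metric.sphere 0 1 ∧
      (∀ x ∈ t, ∀ y ∈ t, x ≠ y → ε ≤ dist x y) ∧ t.card = k} with hS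
  have hSne : S.Nonempty := ⟨0, ∅, by simp, by simp, rfl⟩
  have hSbd : BddAbove S := by
    refine ⟨⌈B⌉₊, ?_⟩
    rintro k ⟨t, ht, hsep, rfl⟩
    have := pack_bound n hn ε hε0 hε1 t ht hsep
    exact_mod_cast this.trans (Nat.le_ceil B)
  obtain ⟨t, ht, hsep, hcard⟩ := Nat.sSup_mem hSne hSbd
  refine ⟨t, ht, ?_, hcard ▸ pack_bound n hn ε hε0 hε1 t ht hsep⟩
  intro x hx
  by_contra h
  push_neg at h
  have hxt : x ∉ t := fun hxt => absurd (h x hxt) (by simp [hε0])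
  have hsep' : ∀ a ∈ insert x t, ∀ b ∈ insert x t, a ≠ b → ε ≤ dist a b := by
    intro a ha b hb hab
    rw [Finset.mem_insert] at ha hb
    rcases ha with rfl | ha
    · rcases hb with rfl | hb
      · exact absurd rfl hab
      · exact h b hb
    · rcases hb with rfl | hb
      · rw [dist_comm]; exact h a ha
      · exact hsep a ha b hb hab
  have hmem : (insert x t).card ∈ S := by
    refine ⟨insert x t, ?_, hsep', rfl⟩
    rw [Finset.coe_insert]
    exact Set.insert_subset hx ht
  have := le_csSup hSbd hmem
  rw [Finset.card_insert_of_notMem hxt, hcard] at this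
  omega
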